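/- Let X be a finite subset of α with n = |X| ≥ 1 and write I = I(n). Let x⁺ ∈ α with x⁺ ∉ X and let x⁻ ∈ X, and suppose x⁺ < x_(I) and x⁻ < x_(I). Set X' = (X \ {x⁻}) ∪ {x⁺}, so |X'| = n and the median index is unchanged. Then L(X') = ({x⁺} ∪ L(X)) \ {x⁻} and R(X') = R(X). -/

import Mathlib

open Finset

/-- Median index `I(n) = ⌈n/2⌉`. -/
def medianIdx (n : ℕ) : ℕ := (n + 1) / 2

/-- 1-indexed rank of `x` in `X`: the number of elements of `X` that are `≤ x`.
For `x ∈ X`, `rank X x = i` means `x` is the `i`-th smallest element of `X`. -/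
def rank {α : Type*} [LinearOrder α] (X : Finset α) (x : α) : ℕ :=
  (X.filter (fun y => y ≤ x)).card

/-- Left part of the median partition: elements of rank `< I(|X|)`. -/
def medL {α : Type*} [LinearOrder α] (X : Finset α) : Finset α :=
  X.filter (fun x => rank X x < medianIdx X.card)

/-- Right part of the median partition: elements of rank `≥ I(|X|)`. -/
def medR {α : Type*} [LinearOrder α] (X : Finset α) : Finset α :=
  X.filter (fun x => medianIdx X.card ≤ rank X x)

lemma rank_mono {α : Type*} [LinearOrder α] (Y : Finset α) {y z : α} (h : y ≤ z) :
    rank Y y ≤ rank Y z := by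
  apply Finset.card_le_card
  exact Finset.monotone_filter_right Y (fun a _ ha => le_trans ha h)

lemma rank_lt_rank_iff {α : Type*} [LinearOrder α] {Y : Finset α} {y z : α}
    (hz : z ∈ Y) : rank Y y < rank Y z ↔ y < z := by
  constructor
  · intro h
    by_contra hc
    exact absurd (rank_mono Y (not_lt.mp hc)) (not_le.mpr h)
  · intro h
    apply Finset.card_lt_card
    constructor
    · exact Finset.monotone_filter_right Y (fun a _ ha => le_trans ha h.le)
    · intro hsub
      have := hsub (Finset.mem_filter.mpr ⟨hz, le_refl z⟩)
      exact absurd (Finset.mem_filter.mp this).2 (not_le.mpr h)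

theorem median_replace_both_left {α : Type*} [LinearOrder α]
    (X : Finset α) (hn : 1 ≤ X.card)
    (xI : α) (hxI : xI ∈ X) (hrank : rank X xI = medianIdx X.card)
    (xp : α) (hxp : xp ∉ X) (xm : α) (hxm : xm ∈ X)
    (hplt : xp < xI) (hmlt : xm < xI)
    (X' : Finset α) (hX' : X' = (X \ {xm}) ∪ {xp}) :
    medL X' = (insert xp (medL X)) \ {xm} ∧ medR X' = medR X := by
  have hmne : xm ≠ xI := ne_of_lt hmlt
  have hpne : xp ≠ xm := fun h => hxp (h ▸ hxm)
  have hxI' : xI ∈ X' := by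
    subst hX'
    simp only [Finset.mem_union, Finset.mem_sdiff, Finset.mem_singleton]
    exact Or.inl ⟨hxI, fun h => hmne h.symm⟩
  have hcard : X'.card = X.card := by
    subst hX'
    rw [Finset.card_union_of_disjoint, Finset.card_sdiff_of_subset (by simpa using hxm)]
    · simp
      omega
    · simp [hxp]
  -- the filter over X' at xI
  have hfil : X'.filter (fun z => z ≤ xI) =
      ((X.filter (fun z => z ≤ xI)) \ {xm}) ∪ {xp} := by
    subst hX'
    ext a
    simp only [Finset.mem_filter, Finset.mem_union, Finset.mem_sdiff,
      Finset.mem_singleton]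
    constructor
    · rintro ⟨(⟨ha, hne⟩ | rfl), hle⟩
      · exact Or.inl ⟨⟨ha, hle⟩, hne⟩
      · exact Or.inr rfl
    · rintro (⟨⟨ha, hle⟩, hne⟩ | rfl)
      · exact ⟨Or.inl ⟨ha, hne⟩, hle⟩
      · exact ⟨Or.inr rfl, hplt.le⟩
  have hxmfil : xm ∈ X.filter (fun z => z ≤ xI) :=
    Finset.mem_filter.mpr ⟨hxm, hmlt.le⟩
  have hrank' : rank X' xI = medianIdx X.card := by
    rw [rank, hfil, Finset.card_union_of_disjoint, Finset.card_sdiff_of_subset (by simpa using hxmfil)]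
    · have h1 : 1 ≤ (X.filter (fun z => z ≤ xI)).card :=
        Finset.card_pos.mpr ⟨xm, hxmfil⟩
      simp only [Finset.card_singleton]
      rw [← hrank, rank]
      omega
    · simp only [Finset.disjoint_singleton_right, Finset.mem_sdiff, Finset.mem_filter]
      intro h
      exact hxp h.1.1
  -- characterizations
  have hmedL : medL X = X.filter (fun x => x < xI) := by
    unfold medL
    apply Finset.filter_congr
    intro a _
    simp only [← hrank, rank_lt_rank_iff hxI]
  have hmedR : medR X = X.filter (fun x => xI ≤ x) := by
    unfold medR
    apply Finset.filter_congr
    intro a _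
    rw [← hrank, ← not_lt (a := rank X a), rank_lt_rank_iff hxI, not_lt]
  have hmedL' : medL X' = X'.filter (fun x => x < xI) := by
    unfold medL
    apply Finset.filter_congr
    intro a _
    rw [hcard, ← hrank', rank_lt_rank_iff hxI']
  have hmedR' : medR X' = X'.filter (fun x => xI ≤ x) := by
    unfold medR
    apply Finset.filter_congr
    intro a _
    rw [hcard, ← hrank', ← not_lt (a := rank X' a), rank_lt_rank_iff hxI', not_lt]
  constructor
  · rw [hmedL', hmedL]
    subst hX'
    ext a
    simp only [Finset.mem_filter, Finset.mem_union, Finset.mem_sdiff,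
      Finset.mem_singleton, Finset.mem_insert]
    constructor
    · rintro ⟨(⟨ha, hne⟩ | rfl), hlt⟩
      · exact ⟨Or.inr ⟨ha, hlt⟩, hne⟩
      · exact ⟨Or.inl rfl, hpne⟩
    · rintro ⟨(rfl | ⟨ha, hlt⟩), hne⟩
      · exact ⟨Or.inr rfl, hplt⟩
      · exact ⟨Or.inl ⟨ha, hne⟩, hlt⟩
  · rw [hmedR', hmedR]
    subst hX'
    ext a
    simp only [Finset.mem_filter, Finset.mem_union, Finset.mem_sdiff,
      Finset.mem_singleton]
    constructor
    · rintro ⟨(⟨ha, _⟩ | rfl), hle⟩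
      · exact ⟨ha, hle⟩
      · exact absurd hle (not_le.mpr hplt)
    · rintro ⟨ha, hle⟩
      exact ⟨Or.inl ⟨ha, fun h => absurd hle (h ▸ not_le.mpr hmlt)⟩, hle⟩
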